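/- arXiv:alg-geom/9611013 — 2 statements merged into one kernel-verified Lean document; each statement's English description precedes it below -/
import Mathlib

section
/- Let V be a finite-dimensional vector space over ℂ, let t : V → V be a diagonalizable linear map, and suppose that for each eigenvalue a of t with eigenspace V_a there is a scalar d_a ∈ ℂ such that the polynomial x² − a·x + d_a has two distinct roots. Then the linear endomorphism of V ⊕ V given in block form by T(f,g) = (t f + g, −D f), where D acts as d_a on V_a, is diagonalizable. -/
/-- If `t` is diagonalizable, `D` acts as a scalar `d_a` on each eigenspace `V_a` of `t`,
and each polynomial `x² - a x + d_a` has two distinct roots, then the block operator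
`(f, g) ↦ (t f + g, -D f)` on `V ⊕ V` is diagonalizable. -/
theorem block_operator_diagonalizable
    (V : Type*) [AddCommGroup V] [Module ℂ V] [FiniteDimensional ℂ V]
    (t D : V →ₗ[ℂ] V) (n : ℕ) (b : Module.Basis (Fin n) ℂ V)
    (h : ∀ i, ∃ a d : ℂ, t (b i) = a • b i ∧ D (b i) = d • b i ∧
      ∃ α β : ℂ, α ≠ β ∧ ∀ x : ℂ, x ^ 2 - a * x + d = (x - α) * (x - β)) :
    ∃ (m : ℕ) (c : Module.Basis (Fin m) ℂ (V × V)), ∀ i, ∃ μ : ℂ,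
      (LinearMap.prod (t ∘ₗ LinearMap.fst ℂ V V + LinearMap.snd ℂ V V)
        (-(D ∘ₗ LinearMap.fst ℂ V V))) (c i) = μ • c i := by
  classical
  choose a d ht hD α β hab hpoly using h
  -- the candidate eigenvectors
  set v : Fin n ⊕ Fin n → V × V :=
    Sum.elim (fun i => (b i, (α i - a i) • b i)) (fun i => (b i, (β i - a i) • b i)) with hv
  set v' : Fin (n + n) → V × V := v ∘ finSumFinEquiv.symm with hv'
  have hrange : Set.range v' = Set.range v := finSumFinEquiv.symm.surjective.range_comp v
  -- spanning
  have hsnd : ∀ i, ((0 : V), b i) ∈ Submodule.span ℂ (Set.range v) := by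
    intro i
    have h1 : v (Sum.inl i) ∈ Submodule.span ℂ (Set.range v) :=
      Submodule.subset_span ⟨Sum.inl i, rfl⟩
    have h2 : v (Sum.inr i) ∈ Submodule.span ℂ (Set.range v) :=
      Submodule.subset_span ⟨Sum.inr i, rfl⟩
    have hδ : α i - β i ≠ 0 := sub_ne_zero.mpr (hab i)
    have key : ((0 : V), b i) = (α i - β i)⁻¹ • (v (Sum.inl i) - v (Sum.inr i)) := by
      simp only [hv, Sum.elim_inl, Sum.elim_inr, Prod.mk_sub_mk, sub_self, ← sub_smul,
        Prod.smul_mk, smul_zero, smul_smul]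
      refine Prod.ext rfl ?_
      rw [show (α i - β i)⁻¹ * (α i - a i - (β i - a i)) = 1 by field_simp; ring, one_smul]
    rw [key]
    exact Submodule.smul_mem _ _ (Submodule.sub_mem _ h1 h2)
  have hfst : ∀ i, ((b i : V), (0 : V)) ∈ Submodule.span ℂ (Set.range v) := by
    intro i
    have h1 : v (Sum.inl i) ∈ Submodule.span ℂ (Set.range v) :=
      Submodule.subset_span ⟨Sum.inl i, rfl⟩
    have key : ((b i : V), (0 : V)) = v (Sum.inl i) - (α i - a i) • ((0 : V), b i) := by
      simp [hv, Prod.ext_iff]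
    rw [key]
    exact Submodule.sub_mem _ h1 (Submodule.smul_mem _ _ (hsnd i))
  have hspan : ⊤ ≤ Submodule.span ℂ (Set.range v') := by
    rw [hrange, ← (b.prod b).span_eq]
    refine Submodule.span_le.mpr ?_
    rintro x ⟨j, rfl⟩
    rcases j with i | i
    · simpa [Module.Basis.prod_apply] using hfst i
    · simpa [Module.Basis.prod_apply] using hsnd i
  have hcard : Fintype.card (Fin (n + n)) = Module.finrank ℂ (V × V) := by
    have : Module.finrank ℂ V = n := by
      rw [Module.finrank_eq_card_basis b, Fintype.card_fin]
    simp [Module.finrank_prod, this]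
  refine ⟨n + n, basisOfTopLeSpanOfCardEqFinrank v' hspan hcard, ?_⟩
  intro i
  rw [coe_basisOfTopLeSpanOfCardEqFinrank]
  have heig : ∀ (j : Fin n) (μ : ℂ), μ ^ 2 - a j * μ + d j = 0 →
      (LinearMap.prod (t ∘ₗ LinearMap.fst ℂ V V + LinearMap.snd ℂ V V)
        (-(D ∘ₗ LinearMap.fst ℂ V V))) ((b j, (μ - a j) • b j)) =
        μ • ((b j : V), (μ - a j) • b j) := by
    intro j μ hμ
    simp only [LinearMap.prod_apply, Function.prod, LinearMap.add_apply, LinearMap.coe_comp,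
      Function.comp_apply, LinearMap.fst_apply, LinearMap.snd_apply, LinearMap.neg_apply,
      Prod.smul_mk, ht j, hD j, smul_smul]
    refine Prod.ext ?_ ?_
    · simp only
      rw [← add_smul]
      congr 1
      ring
    · simp only
      rw [← neg_smul]
      congr 1
      linear_combination -hμ
  rcases hi : finSumFinEquiv.symm i with j | j
  · refine ⟨α j, ?_⟩
    have : α j ^ 2 - a j * α j + d j = 0 := by
      have := hpoly j (α j); linear_combination this
    simpa [hv', hv, hi] using heig j (α j) this
  · refine ⟨β j, ?_⟩
    have : β j ^ 2 - a j * β j + d j = 0 := by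
      have := hpoly j (β j); linear_combination this
    simpa [hv', hv, hi] using heig j (β j) this
end

section
/- Let M be a free module of rank 2 over a commutative ring R (a finite product of fields), φ an R-linear endomorphism of M with characteristic polynomial x² − a·x + d, and suppose λ ∈ R is a double root of this polynomial. If φ satisfies a polynomial identity P(φ) = 0 with P ∈ R[x] having simple roots whose pairwise differences are units, then φ = λ·id_M. -/
open Polynomial

lemma taylor_two_aux {R : Type*} [CommRing R] (p : R[X]) (lam : R) :
    ∃ q : R[X], p = C (p.eval lam) + C (p.derivative.eval lam) * (X - C lam)
      + (X - C lam) ^ 2 * q := by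
  obtain ⟨q1, hq1⟩ := X_sub_C_dvd_sub_C_eval (a := lam) (p := p)
  have hp : p = C (p.eval lam) + (X - C lam) * q1 := by linear_combination hq1
  have hd : p.derivative.eval lam = q1.eval lam := by
    have := congrArg (fun r : R[X] => r.derivative.eval lam) hp
    simpa using this
  obtain ⟨q2, hq2⟩ := X_sub_C_dvd_sub_C_eval (a := lam) (p := q1)
  exact ⟨q2, by linear_combination hq1 + (X - C lam) * hq2 - (X - C lam) * congrArg C hd⟩

/-- `M` is free of rank 2 over a finite product of fields `R`, `φ` an endomorphism with
characteristic polynomial `x² - a x + d = (x - λ)²`.  If `φ` is annihilated by a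
polynomial with simple roots whose pairwise differences are units, then `φ = λ • id`. -/
theorem char_poly_double_root_semisimple_scalar
    (ι : Type*) [Fintype ι] (K : ι → Type*) [∀ i, Field (K i)]
    (M : Type*) [AddCommGroup M] [Module (∀ i, K i) M]
    [Module.Free (∀ i, K i) M] [Module.Finite (∀ i, K i) M]
    (hrank : Module.rank (∀ i, K i) M = 2)
    (φ : Module.End (∀ i, K i) M) (a d lam : ∀ i, K i)
    (hcharpoly : LinearMap.charpoly φ = X ^ 2 - C a * X + C d)
    (hdouble : (X : Polynomial (∀ i, K i)) ^ 2 - C a * X + C d = (X - C lam) ^ 2)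
    (s : Finset (∀ i, K i)) (c : (∀ i, K i) → (∀ i, K i))
    (hdist : ∀ x ∈ s, ∀ y ∈ s, x ≠ y → IsUnit (c x - c y))
    (hP : Polynomial.aeval φ (∏ x ∈ s, (X - C (c x))) = 0) :
    φ = lam • (1 : Module.End (∀ i, K i) M) := by
  rcases isEmpty_or_nonempty ι with hι | hι
  · haveI : Subsingleton (∀ i, K i) := ⟨fun f g => funext fun i => hι.elim i⟩
    rw [rank_subsingleton] at hrank
    exact absurd hrank (by norm_num)
  haveI : Nontrivial (∀ i, K i) :=
    ⟨1, 0, fun h => one_ne_zero (congrFun h hι.some)⟩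
  set f := algebraMap (∀ i, K i) (Module.End (∀ i, K i) M) with hf
  -- faithfulness
  have hne : Nonempty (Module.Free.ChooseBasisIndex (∀ i, K i) M) := by
    rw [Module.Free.rank_eq_card_chooseBasisIndex] at hrank
    by_contra h
    rw [not_nonempty_iff] at h
    rw [Cardinal.mk_eq_zero] at hrank
    exact two_ne_zero hrank.symm
  have hfaith : ∀ r : ∀ i, K i, f r = 0 → r = 0 := by
    intro r hr
    obtain ⟨i⟩ := hne
    set b := Module.Free.chooseBasis (∀ i, K i) M
    have h1 : r • b i = 0 := by
      have := congrArg (fun g : Module.End (∀ i, K i) M => g (b i)) hr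
      simpa [hf, Module.algebraMap_end_apply] using this
    have h2 := congrArg (fun m => (b.repr m) i) h1
    simpa [Module.Basis.repr_self] using h2
  -- Cayley-Hamilton
  set N : Module.End (∀ i, K i) M := aeval φ (X - C lam) with hNdef
  have hN2 : N ^ 2 = 0 := by
    have hCH := LinearMap.aeval_self_charpoly φ
    rw [hcharpoly, hdouble, map_pow] at hCH
    exact hCH
  -- Separability / Bezout
  have hsep : (∏ x ∈ s, (X - C (c x)) : Polynomial (∀ i, K i)).Separable :=
    separable_prod' (fun x hx y hy hxy => isCoprime_X_sub_C_of_isUnit_sub (hdist x hx y hy hxy))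
      (fun x _ => separable_X_sub_C)
  obtain ⟨u, v, huv⟩ := hsep
  set P : Polynomial (∀ i, K i) := ∏ x ∈ s, (X - C (c x)) with hPdef
  set e0 := P.eval lam with he0
  set e1 := P.derivative.eval lam with he1
  have hbez : u.eval lam * e0 + v.eval lam * e1 = 1 := by
    have := congrArg (fun r : Polynomial (∀ i, K i) => r.eval lam) huv
    simpa using this
  -- Taylor expansion of P at lam, applied to φ
  obtain ⟨q, hq⟩ := taylor_two_aux P lam
  have hkey : f e0 + f e1 * N = 0 := by
    have := congrArg (aeval φ) hq
    rw [hP] at this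
    simp only [map_add, map_mul, map_pow, aeval_C, ← hNdef, hN2, zero_mul, mul_zero,
      add_zero] at this
    exact this.symm
  have hN0 : f e0 * N = 0 := by
    have h := congrArg (· * N) hkey
    simpa [add_mul, mul_assoc, ← pow_two, hN2] using h
  have h2 : f e1 * N = - f e0 := eq_neg_of_add_eq_zero_left (by rwa [add_comm] at hkey)
  have hNval : N = f (-(v.eval lam * e0)) := by
    calc N = f (u.eval lam * e0 + v.eval lam * e1) * N := by
            rw [hbez, map_one, one_mul]
      _ = f (u.eval lam) * (f e0 * N) + f (v.eval lam) * (f e1 * N) := by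
            rw [map_add, map_mul, map_mul, add_mul, mul_assoc, mul_assoc]
      _ = f (v.eval lam) * (- f e0) := by rw [hN0, mul_zero, zero_add, h2]
      _ = f (-(v.eval lam * e0)) := by rw [map_neg, map_mul, mul_neg]
  set mu := -(v.eval lam * e0) with hmu_def
  have hmu2 : mu ^ 2 = 0 := hfaith _ (by rw [map_pow, ← hNval, hN2])
  have hmu : mu = 0 := by
    funext i
    have h' : mu i ^ 2 = 0 := congrFun hmu2 i
    exact pow_eq_zero_iff two_ne_zero |>.mp h'
  have hNzero : N = 0 := by rw [hNval, hmu, map_zero]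
  have hfin : φ - f lam = 0 := by
    have hNE : N = φ - f lam := by rw [hNdef, map_sub, aeval_X, aeval_C]
    rw [← hNE, hNzero]
  have hφ : φ = f lam := sub_eq_zero.mp hfin
  rw [hφ, hf, Algebra.algebraMap_eq_smul_one]
end
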